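/- σ₁ upper bound on stability support: suppose x is the unique minimiser of the LASSO problem with input (y,A), with support S, Sᶜ ≠ ∅, and there is i ∉ S with |Aᵢᵀ(Ax − y)| > λ/2 − t for some 0 < t < λ/4. Then stsp(y,A) ≤ 4‖A‖_max · t / λ. -/

import Mathlib

open Matrix BigOperators

noncomputable def lassoObj {m N : ℕ} (lam : ℝ) (y : Fin m → ℝ)
    (A : Matrix (Fin m) (Fin N) ℝ) (x : Fin N → ℝ) : ℝ :=
  (∑ i, (A.mulVec x i - y i) ^ 2) + lam * ∑ j, |x j|

def lassoSol {m N : ℕ} (lam : ℝ) (y : Fin m → ℝ)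
    (A : Matrix (Fin m) (Fin N) ℝ) : Set (Fin N → ℝ) :=
  {x | ∀ z, lassoObj lam y A x ≤ lassoObj lam y A z}

/-- The stability support: the distance to support change. -/
noncomputable def stsp {m N : ℕ} (lam : ℝ) (y : Fin m → ℝ)
    (A : Matrix (Fin m) (Fin N) ℝ) : ℝ :=
  sInf {δ : ℝ | 0 ≤ δ ∧
    ∃ (yt : Fin m → ℝ) (At : Matrix (Fin m) (Fin N) ℝ)
      (x xt : Fin N → ℝ), x ∈ lassoSol lam y A ∧ xt ∈ lassoSol lam yt At ∧
      (∀ i, |yt i - y i| ≤ δ) ∧ (∀ i j, |A i j - At i j| ≤ δ) ∧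
      Function.support x ≠ Function.support xt}

/-- The entrywise max "norm" of a matrix. -/
noncomputable def matMax {m N : ℕ} (A : Matrix (Fin m) (Fin N) ℝ) : ℝ :=
  ⨆ i, ⨆ j, |A i j|
lemma lassoObj_continuous {m N : ℕ} (lam : ℝ) (y : Fin m → ℝ)
    (A : Matrix (Fin m) (Fin N) ℝ) : Continuous (lassoObj lam y A) := by
  unfold lassoObj
  apply Continuous.add
  · apply continuous_finset_sum
    intro k _
    have h : Continuous fun x : Fin N → ℝ => A.mulVec x k := by
      simp only [Matrix.mulVec, dotProduct]
      exact continuous_finset_sum _ fun j _ => continuous_const.mul (continuous_apply j)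
    exact (h.sub continuous_const).pow 2
  · exact continuous_const.mul (continuous_finset_sum _ fun j _ => (continuous_apply j).abs)

lemma lassoObj_l1_le {m N : ℕ} (lam : ℝ) (y : Fin m → ℝ)
    (A : Matrix (Fin m) (Fin N) ℝ) (x : Fin N → ℝ) :
    lam * ∑ j, |x j| ≤ lassoObj lam y A x :=
  le_add_of_nonneg_left (Finset.sum_nonneg fun k _ => sq_nonneg _)

lemma lassoSol_nonempty {m N : ℕ} (lam : ℝ) (hlam : 0 < lam) (y : Fin m → ℝ)
    (A : Matrix (Fin m) (Fin N) ℝ) : (lassoSol lam y A).Nonempty := by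
  set f := lassoObj lam y A with hf
  set c := f 0 with hc
  have hc0 : 0 ≤ c := by
    have := lassoObj_l1_le lam y A 0
    simpa using this
  have hball : ∀ x : Fin N → ℝ, f x ≤ c → x ∈ Metric.closedBall (0 : Fin N → ℝ) (c / lam) := by
    intro x hx
    rw [Metric.mem_closedBall, dist_zero_right]
    rw [pi_norm_le_iff_of_nonneg (div_nonneg hc0 hlam.le)]
    intro j
    have h1 : |x j| ≤ ∑ j', |x j'| :=
      Finset.single_le_sum (fun k _ => abs_nonneg (x k)) (Finset.mem_univ j)
    have h2 : lam * ∑ j', |x j'| ≤ c := (lassoObj_l1_le lam y A x).trans hx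
    rw [Real.norm_eq_abs]
    rw [le_div_iff₀ hlam]
    nlinarith [abs_nonneg (x j)]
  have h0mem : (0 : Fin N → ℝ) ∈ Metric.closedBall (0 : Fin N → ℝ) (c / lam) := by
    simpa using div_nonneg hc0 hlam.le
  obtain ⟨x, hxmem, hxmin⟩ :=
    (isCompact_closedBall (0 : Fin N → ℝ) (c / lam)).exists_isMinOn ⟨0, h0mem⟩
      (lassoObj_continuous lam y A).continuousOn
  refine ⟨x, fun z => ?_⟩
  by_cases hz : f z ≤ c
  · exact hxmin (hball z hz)
  · have hxc : f x ≤ c := hxmin h0mem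
    linarith [not_le.mp hz]

lemma lasso_kkt {m N : ℕ} (lam : ℝ) (y : Fin m → ℝ)
    (A : Matrix (Fin m) (Fin N) ℝ) (x : Fin N → ℝ) (hx : x ∈ lassoSol lam y A)
    (i : Fin N) (hxi : x i = 0) :
    |∑ k, A k i * (A.mulVec x k - y k)| ≤ lam / 2 := by
  set g := ∑ k, A k i * (A.mulVec x k - y k) with hg
  set C := ∑ k, (A k i) ^ 2 with hC
  have hC0 : 0 ≤ C := Finset.sum_nonneg fun k _ => sq_nonneg _
  have key : ∀ ε : ℝ, 0 ≤ 2 * ε * g + ε ^ 2 * C + lam * |ε| := by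
    intro ε
    set z : Fin N → ℝ := fun j => if j = i then ε else x j with hz
    have hmv : ∀ k, A.mulVec z k = A.mulVec x k + A k i * ε := by
      intro k
      simp only [Matrix.mulVec, dotProduct]
      have : ∀ j, A k j * z j = A k j * x j + (if j = i then A k i * ε else 0) := by
        intro j
        by_cases hj : j = i
        · subst hj; simp [hz, hxi]
        · simp [hz, hj]
      rw [Finset.sum_congr rfl fun j _ => this j, Finset.sum_add_distrib,
        Finset.sum_ite_eq' Finset.univ i fun _ => A k i * ε]
      simp
    have hl1 : ∑ j, |z j| = (∑ j, |x j|) + |ε| := by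
      have : ∀ j, |z j| = |x j| + (if j = i then |ε| else 0) := by
        intro j
        by_cases hj : j = i
        · subst hj; simp [hz, hxi]
        · simp [hz, hj]
      rw [Finset.sum_congr rfl fun j _ => this j, Finset.sum_add_distrib,
        Finset.sum_ite_eq' Finset.univ i fun _ => |ε|]
      simp
    have hobj := hx z
    unfold lassoObj at hobj
    have hsq : ∑ k, (A.mulVec z k - y k) ^ 2
        = (∑ k, (A.mulVec x k - y k) ^ 2) + 2 * ε * g + ε ^ 2 * C := by
      have : ∀ k, (A.mulVec z k - y k) ^ 2
          = (A.mulVec x k - y k) ^ 2 + 2 * ε * (A k i * (A.mulVec x k - y k))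
            + ε ^ 2 * (A k i) ^ 2 := by
        intro k; rw [hmv k]; ring
      rw [Finset.sum_congr rfl fun k _ => this k]
      simp only [Finset.sum_add_distrib, ← Finset.mul_sum, hg, hC]
    rw [hsq, hl1] at hobj
    nlinarith [hobj]
  by_contra hcon
  push_neg at hcon
  set s := (2 * |g| - lam) / (C + 1) with hs
  have hs0 : 0 < s := div_pos (by linarith) (by linarith)
  have hseq : s * (C + 1) = 2 * |g| - lam := by
    rw [hs, div_mul_cancel₀ _ (ne_of_gt (by linarith : (0:ℝ) < C + 1))]
  set ε : ℝ := if 0 ≤ g then -s else s with hε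
  have hεg : ε * g = -(s * |g|) := by
    by_cases h : 0 ≤ g
    · simp only [hε, if_pos h, abs_of_nonneg h]; ring
    · simp only [hε, if_neg h, abs_of_neg (not_le.mp h)]; ring
  have hεabs : |ε| = s := by
    by_cases h : 0 ≤ g
    · simp [hε, if_pos h, abs_of_pos hs0]
    · simp [hε, if_neg h, abs_of_pos hs0]
  have hεsq : ε ^ 2 = s ^ 2 := by
    by_cases h : 0 ≤ g <;> simp [hε, h] <;> ring
  have := key ε
  rw [hεabs, hεsq] at this
  nlinarith [this, hεg, hs0, hC0]

lemma abs_le_matMax {m N : ℕ} (A : Matrix (Fin m) (Fin N) ℝ) (k : Fin m) (j : Fin N) :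
    |A k j| ≤ matMax A := by
  calc |A k j| ≤ ⨆ j', |A k j'| :=
        le_ciSup (f := fun j' => |A k j'|) (Set.Finite.bddAbove (Set.finite_range _)) j
    _ ≤ matMax A := le_ciSup (f := fun k' => ⨆ j', |A k' j'|)
        (Set.Finite.bddAbove (Set.finite_range _)) k

lemma matMax_nonneg {m N : ℕ} (A : Matrix (Fin m) (Fin N) ℝ) : 0 ≤ matMax A := by
  rcases isEmpty_or_nonempty (Fin m) with h | h
  · simp [matMax, Real.iSup_of_isEmpty]
  · obtain ⟨k⟩ := h
    rcases isEmpty_or_nonempty (Fin N) with h' | h'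
    · simp [matMax, Real.iSup_of_isEmpty]
    · obtain ⟨j⟩ := h'
      exact (abs_nonneg (A k j)).trans (abs_le_matMax A k j)

/-- σ₁ upper bound on the stability support. -/
theorem lasso_sigma1_upper_bound {m N : ℕ} (lam : ℝ) (hlam : 0 < lam)
    (y : Fin m → ℝ) (A : Matrix (Fin m) (Fin N) ℝ)
    (x : Fin N → ℝ) (hx : lassoSol lam y A = {x})
    (i : Fin N) (hxi : x i = 0) (t : ℝ) (ht0 : 0 < t) (ht1 : t < lam / 4)
    (hbig : lam / 2 - t < |Aᵀ.mulVec (A.mulVec x - y) i|) :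
    stsp lam y A ≤ 4 * matMax A * t / lam := by
  have hxsol : x ∈ lassoSol lam y A := by rw [hx]; rfl
  have hlt : 0 < lam - 2 * t := by linarith
  set c : ℝ := lam / (lam - 2 * t) with hcdef
  have hc1 : 1 ≤ c := by
    rw [hcdef, le_div_iff₀ hlt]; linarith
  have hc0 : 0 < c := lt_of_lt_of_le one_pos hc1
  set At : Matrix (Fin m) (Fin N) ℝ := fun k j => if j = i then c * A k j else A k j with hAt
  -- mulVec of At in terms of A
  have hmv : ∀ (z : Fin N → ℝ) (k : Fin m),
      At.mulVec z k = A.mulVec (fun j => if j = i then c * z j else z j) k := by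
    intro z k
    simp only [Matrix.mulVec, dotProduct]
    refine Finset.sum_congr rfl fun j _ => ?_
    by_cases hj : j = i <;> simp [hAt, hj] <;> ring
  have hmv0 : ∀ z : Fin N → ℝ, z i = 0 → At.mulVec z = A.mulVec z := by
    intro z hz
    funext k
    rw [hmv z k]
    congr 1
    funext j
    by_cases hj : j = i <;> simp [hj, hz]
  have hobj0 : ∀ z : Fin N → ℝ, z i = 0 → lassoObj lam y At z = lassoObj lam y A z := by
    intro z hz
    unfold lassoObj
    rw [hmv0 z hz]
  -- shrink map
  have hshrink : ∀ w : Fin N → ℝ,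
      lassoObj lam y At (fun j => if j = i then w j / c else w j) ≤ lassoObj lam y A w := by
    intro w
    unfold lassoObj
    have hmve : At.mulVec (fun j => if j = i then w j / c else w j) = A.mulVec w := by
      funext k
      rw [hmv _ k]
      congr 1
      funext j
      by_cases hj : j = i
      · simp [hj, mul_div_cancel₀ _ (ne_of_gt hc0)]
      · simp [hj]
    rw [hmve]
    have hl1 : ∑ j, |if j = i then w j / c else w j| ≤ ∑ j, |w j| := by
      apply Finset.sum_le_sum
      intro j _
      by_cases hj : j = i
      · subst hj
        rw [if_pos rfl, abs_div, abs_of_pos hc0]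
        exact div_le_self (abs_nonneg _) hc1
      · simp [hj]
    have := mul_le_mul_of_nonneg_left hl1 hlam.le
    linarith
  -- the δ
  set δ : ℝ := 4 * matMax A * t / lam with hδ
  have hδ0 : 0 ≤ δ := by
    apply div_nonneg _ hlam.le
    have := matMax_nonneg A
    nlinarith
  -- perturbation bound
  have hpert : ∀ (k : Fin m) (j : Fin N), |A k j - At k j| ≤ δ := by
    intro k j
    by_cases hj : j = i
    · subst hj
      simp only [hAt, if_pos rfl]
      have h1 : |A k j - c * A k j| = (c - 1) * |A k j| := by
        rw [show A k j - c * A k j = -((c-1) * A k j) by ring, abs_neg, abs_mul,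
          abs_of_nonneg (by linarith : (0:ℝ) ≤ c - 1)]
      rw [h1]
      have h2 : c - 1 ≤ 4 * t / lam := by
        rw [hcdef]
        rw [div_sub_one (ne_of_gt hlt), div_le_div_iff₀ hlt hlam]
        nlinarith
      have h3 : |A k j| ≤ matMax A := abs_le_matMax A k j
      have h4 : (c - 1) * |A k j| ≤ (4 * t / lam) * matMax A :=
        mul_le_mul h2 h3 (abs_nonneg _) (by positivity)
      calc (c - 1) * |A k j| ≤ (4 * t / lam) * matMax A := h4
        _ = δ := by rw [hδ]; ring
    · simp only [hAt, if_neg hj]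
      simpa using hδ0
  obtain ⟨xt, hxt⟩ := lassoSol_nonempty lam hlam y At
  have hsupp : Function.support x ≠ Function.support xt := by
    intro hsupp
    have hxti : xt i = 0 := by
      by_contra h
      have : i ∈ Function.support x := hsupp ▸ h
      exact this hxi
    -- xt minimizes original problem
    have hxtsol : xt ∈ lassoSol lam y A := by
      intro w
      calc lassoObj lam y A xt = lassoObj lam y At xt := (hobj0 xt hxti).symm
        _ ≤ lassoObj lam y At (fun j => if j = i then w j / c else w j) := hxt _
        _ ≤ lassoObj lam y A w := hshrink w
    have hxteq : xt = x := by
      rw [hx] at hxtsol; exact hxtsol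
    rw [hxteq] at hxt
    -- KKT for perturbed problem at x
    have hkkt := lasso_kkt lam y At x hxt i hxi
    have hAtmv : At.mulVec x = A.mulVec x := hmv0 x hxi
    have hsum : ∑ k, At k i * (At.mulVec x k - y k)
        = c * ∑ k, A k i * (A.mulVec x k - y k) := by
      rw [hAtmv, Finset.mul_sum]
      refine Finset.sum_congr rfl fun k _ => ?_
      have hAti : At k i = c * A k i := if_pos rfl
      rw [hAti]; ring
    rw [hsum, abs_mul, abs_of_pos hc0] at hkkt
    have hgeq : |Aᵀ.mulVec (A.mulVec x - y) i| = |∑ k, A k i * (A.mulVec x k - y k)| := by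
      simp [Matrix.mulVec, dotProduct, Matrix.transpose_apply]
    rw [hgeq] at hbig
    have hcl : lam / 2 = c * (lam / 2 - t) := by
      rw [hcdef]; field_simp
    nlinarith [abs_nonneg (∑ k, A k i * (A.mulVec x k - y k))]
  apply csInf_le ⟨0, fun a ha => ha.1⟩
  exact ⟨hδ0, y, At, x, xt, hxsol, hxt, fun k => by simpa using hδ0, hpert, hsupp⟩
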